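/- Let h : ℝ → ℝ be continuous and strictly decreasing with h(p*) = 0, and let p : ℝ → ℝ be differentiable with p'(t) = h(p(t)) for all t ≥ 0. Then p(t) → p* as t → ∞. -/

import Mathlib

open Filter

/-- Global asymptotic stability in the single time-period case (Theorem 1): if `h` is
continuous and strictly decreasing with `h(p*) = 0`, and `p` is a differentiable trajectory
with `p'(t) = h(p(t))` for all `t ≥ 0`, then `p(t) → p*` as `t → ∞`. -/
theorem tendsto_equilibrium_scalar
    (h : ℝ → ℝ) (hcont : Continuous h) (hanti : StrictAnti h)
    (pstar : ℝ) (hzero : h pstar = 0)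
    (p : ℝ → ℝ) (hdiff : Differentiable ℝ p)
    (hode : ∀ t : ℝ, 0 ≤ t → deriv p t = h (p t)) :
    Tendsto p atTop (nhds pstar) := by
  -- the sign of (x - p*) * h x
  have hsign : ∀ x : ℝ, x ≠ pstar → (x - pstar) * h x < 0 := by
    intro x hx
    rcases lt_or_gt_of_ne hx with hlt | hgt
    · have hpos : 0 < h x := by have := hanti hlt; rwa [hzero] at this
      nlinarith
    · have hneg : h x < 0 := by have := hanti hgt; rwa [hzero] at this
      nlinarith
  have hsign' : ∀ x : ℝ, (x - pstar) * h x ≤ 0 := by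
    intro x
    by_cases hx : x = pstar
    · simp [hx, hzero]
    · exact (hsign x hx).le
  set f : ℝ → ℝ := fun t => (p t - pstar) ^ 2 with hfdef
  have hfnonneg : ∀ t, 0 ≤ f t := fun t => sq_nonneg _
  have hfd : ∀ t, HasDerivAt f (2 * ((p t - pstar) * deriv p t)) t := by
    intro t
    have h1 : HasDerivAt (fun t => p t - pstar) (deriv p t) t :=
      ((hdiff t).hasDerivAt).sub_const pstar
    have h2 := h1.fun_pow 2
    simpa [hfdef, mul_comm, mul_assoc, mul_left_comm] using h2
  have hfc : Continuous f := ((hdiff.continuous.sub continuous_const).pow 2)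
  -- f is antitone on [0, ∞)
  have hderiv_nonpos : ∀ t ∈ interior (Set.Ici (0:ℝ)), deriv f t ≤ 0 := by
    intro t ht
    rw [interior_Ici] at ht
    have hd := (hfd t).deriv
    rw [hd, hode t (le_of_lt ht)]
    have := hsign' (p t)
    nlinarith
  have hanti_f : AntitoneOn f (Set.Ici (0:ℝ)) := by
    exact antitoneOn_of_deriv_nonpos (convex_Ici 0) hfc.continuousOn
      (fun t ht => (hfd t).differentiableAt.differentiableWithinAt) hderiv_nonpos
  -- the shifted function G is globally antitone
  set G : ℝ → ℝ := fun t => f (max t 0) with hGdef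
  have hG_anti : Antitone G := by
    intro s t hst
    exact hanti_f (Set.mem_Ici.2 (le_max_right s 0)) (Set.mem_Ici.2 (le_max_right t 0))
      (max_le_max hst le_rfl)
  have hG_bdd : BddBelow (Set.range G) := by
    refine ⟨0, ?_⟩
    rintro x ⟨t, rfl⟩
    exact hfnonneg _
  set L : ℝ := ⨅ t, G t with hLdef
  have hG_tendsto : Tendsto G atTop (nhds L) := tendsto_atTop_ciInf hG_anti hG_bdd
  have hGL : ∀ t, L ≤ G t := fun t => ciInf_le hG_bdd t
  have hLnonneg : 0 ≤ L := le_ciInf fun t => hfnonneg _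
  have hfG : f =ᶠ[atTop] G := by
    filter_upwards [eventually_ge_atTop (0:ℝ)] with t ht
    simp [hGdef, max_eq_left ht]
  have hf_tendsto : Tendsto f atTop (nhds L) := hG_tendsto.congr' hfG.symm
  have hfL : ∀ t, 0 ≤ t → L ≤ f t := by
    intro t ht
    simpa [hGdef, max_eq_left ht] using hGL t
  have hf0 : ∀ t, 0 ≤ t → f t ≤ f 0 :=
    fun t ht => hanti_f (Set.mem_Ici.2 le_rfl) (Set.mem_Ici.2 ht) ht
  -- L must equal 0
  have hL0 : L = 0 := by
    by_contra hL
    have hLpos : 0 < L := lt_of_le_of_ne hLnonneg (Ne.symm hL)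
    -- the compact annulus
    set K : Set ℝ := (fun x => (x - pstar) ^ 2) ⁻¹' Set.Icc L (f 0) with hKdef
    have hKclosed : IsClosed K :=
      (isClosed_Icc).preimage ((continuous_id.sub continuous_const).pow 2)
    have hKbdd : Bornology.IsBounded K := by
      apply (Metric.isBounded_iff_subset_closedBall pstar).2
      refine ⟨Real.sqrt (f 0), fun x hx => ?_⟩
      have hx2 : (x - pstar) ^ 2 ≤ f 0 := hx.2
      have : |x - pstar| ≤ Real.sqrt (f 0) := by
        rw [← Real.sqrt_sq_eq_abs]
        exact Real.sqrt_le_sqrt hx2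
      simpa [Metric.mem_closedBall, Real.dist_eq] using this
    have hKcompact : IsCompact K := Metric.isCompact_of_isClosed_isBounded hKclosed hKbdd
    have hKne : (p 0) ∈ K := by
      constructor
      · exact hfL 0 le_rfl
      · exact le_rfl
    -- max of g on K
    have hgc : Continuous fun x : ℝ => (x - pstar) * h x :=
      (continuous_id.sub continuous_const).mul hcont
    obtain ⟨x0, hx0K, hx0max⟩ := hKcompact.exists_isMaxOn ⟨p 0, hKne⟩ hgc.continuousOn
    have hx0ne : x0 ≠ pstar := by
      intro hx
      have := hx0K.1
      rw [hx] at this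
      simp at this
      linarith
    have hc : (x0 - pstar) * h x0 < 0 := hsign x0 hx0ne
    obtain ⟨c, hcdef⟩ : ∃ c : ℝ, c = 2 * ((x0 - pstar) * h x0) := ⟨_, rfl⟩
    have hcneg : c < 0 := by rw [hcdef]; nlinarith
    -- p t ∈ K for t ≥ 0
    have hpK : ∀ t, 0 ≤ t → p t ∈ K := by
      intro t ht
      exact ⟨hfL t ht, hf0 t ht⟩
    -- F t := f t - c * t is antitone on [0, ∞)
    set F : ℝ → ℝ := fun t => f t - c * t with hFdef
    have hFd : ∀ t, HasDerivAt F (2 * ((p t - pstar) * deriv p t) - c) t := by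
      intro t
      have h2 : HasDerivAt (fun s : ℝ => c * s) c t := by
        simpa using (hasDerivAt_id t).const_mul c
      exact (hfd t).sub h2
    have hF_anti : AntitoneOn F (Set.Ici (0:ℝ)) := by
      have hFc : Continuous F := hfc.sub (continuous_mul_left c)
      apply antitoneOn_of_deriv_nonpos (convex_Ici 0) hFc.continuousOn
        (fun t ht => (hFd t).differentiableAt.differentiableWithinAt) ?_
      intro t ht
      rw [interior_Ici] at ht
      rw [(hFd t).deriv, hode t ht.le]
      have hmem := hpK t ht.le
      have hle : (p t - pstar) * h (p t) ≤ (x0 - pstar) * h x0 := hx0max hmem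
      rw [hcdef]
      nlinarith
    -- derive a contradiction at a large time
    set T : ℝ := (f 0 + 1) / (-c) with hTdef
    have hTpos : 0 < T := by
      apply div_pos
      · have := hfnonneg 0; linarith
      · linarith
    have hFT : F T ≤ F 0 := hF_anti (Set.mem_Ici.2 le_rfl) (Set.mem_Ici.2 hTpos.le) hTpos.le
    have key : ∀ a : ℝ, a < 0 → a * ((f 0 + 1) / (-a)) = -(f 0 + 1) := by
      intro a ha
      have hane : a ≠ 0 := ne_of_lt ha
      rw [div_neg, mul_neg, ← mul_div_assoc, mul_div_cancel_left₀ _ hane]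
    have hcT : c * T = -(f 0 + 1) := by rw [hTdef]; exact key c hcneg
    have hfTle : f T ≤ f 0 + c * T := by
      simp only [hFdef, mul_zero, sub_zero] at hFT
      linarith
    rw [hcT] at hfTle
    have := hfnonneg T
    linarith
  -- conclude
  rw [hL0] at hf_tendsto
  rw [tendsto_iff_dist_tendsto_zero]
  have : (fun t => dist (p t) pstar) = fun t => Real.sqrt (f t) := by
    funext t
    rw [Real.dist_eq, ← Real.sqrt_sq_eq_abs]
  rw [this]
  have hsq : Tendsto Real.sqrt (nhds 0) (nhds 0) := by
    simpa using (Real.continuous_sqrt.tendsto 0)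
  exact hsq.comp hf_tendsto
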